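/- Let k be a field. The Krull dimension of the ring R = ∏_{n ≥ 1} k[x]/(xⁿ) is at least 1 (in particular, it is not zero), even though each factor k[x]/(xⁿ) has Krull dimension 0. -/

import Mathlib

open Polynomial

/-- The ring `k[x]/(xⁿ)`. -/
abbrev TruncPoly (k : Type*) [Field k] (n : ℕ+) : Type _ :=
  k[X] ⧸ Ideal.span {(X : k[X]) ^ (n : ℕ)}

section Aux

variable (k : Type*) [Field k]

lemma truncPoly_nontrivial (n : ℕ+) : Nontrivial (TruncPoly k n) := by
  refine Ideal.Quotient.nontrivial_iff.mpr ?_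
  rw [Ne, Ideal.span_singleton_eq_top]
  intro hu
  have : (0 : ℕ) < (n : ℕ) := n.2
  have := natDegree_eq_zero_of_isUnit hu
  rw [natDegree_X_pow] at this
  omega

lemma truncPoly_artinian (n : ℕ+) : IsArtinianRing (TruncPoly k n) := by
  have hne : (X : k[X]) ^ (n : ℕ) ≠ 0 := pow_ne_zero _ X_ne_zero
  have pb := AdjoinRoot.powerBasis hne
  have : Module.Finite k (AdjoinRoot ((X : k[X]) ^ (n : ℕ))) := pb.finite
  exact IsArtinianRing.of_finite k (AdjoinRoot ((X : k[X]) ^ (n : ℕ)))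

/-- In any commutative ring, if some element `a` satisfies `a ^ m ≠ a ^ (m+1) * b` for all
`m, b`, then the Krull dimension is at least 1. -/
lemma one_le_ringKrullDim_of_elt {R : Type*} [CommRing R] (a : R)
    (h : ∀ (m : ℕ) (b : R), a ^ m ≠ a ^ (m + 1) * b) :
    1 ≤ ringKrullDim R := by
  -- the multiplicative set {a^n (1 + a r)}
  let T : Submonoid R :=
    { carrier := {y | ∃ (m : ℕ) (r : R), y = a ^ m * (1 + a * r)}
      one_mem' := ⟨0, 0, by ring⟩
      mul_mem' := by
        rintro x y ⟨m, r, rfl⟩ ⟨m', r', rfl⟩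
        exact ⟨m + m', r + r' + a * r * r', by ring⟩ }
  have hdisj : Disjoint ((⊥ : Ideal R) : Set R) (T : Set R) := by
    rw [Set.disjoint_left]
    rintro x hx ⟨m, r, rfl⟩
    rw [SetLike.mem_coe, Ideal.mem_bot] at hx
    exact h m (-r) (by rw [← sub_eq_zero]; rw [← hx]; ring)
  obtain ⟨p, hp, -, hpdisj⟩ := Ideal.exists_le_prime_disjoint ⊥ T hdisj
  have hap : a ∉ p := fun hap =>
    Set.disjoint_left.mp hpdisj hap ⟨1, 0, by ring⟩
  have hne : p ⊔ Ideal.span {a} ≠ ⊤ := by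
    intro htop
    rw [Ideal.eq_top_iff_one, Submodule.mem_sup] at htop
    obtain ⟨x, hx, y, hy, hxy⟩ := htop
    rw [Ideal.mem_span_singleton'] at hy
    obtain ⟨c, rfl⟩ := hy
    have hxT : x ∈ (T : Set R) := ⟨0, -c, by rw [← hxy]; ring⟩
    exact Set.disjoint_left.mp hpdisj hx hxT
  obtain ⟨q, hq, hle⟩ := Ideal.exists_le_maximal _ hne
  have hpq : p < q := by
    refine lt_of_le_of_ne (le_trans le_sup_left hle) ?_
    intro hEq
    exact hap (hEq ▸ hle (le_sup_right (α := Ideal R)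
      (Ideal.mem_span_singleton_self a)))
  -- build the length-1 chain in the prime spectrum
  let P : PrimeSpectrum R := ⟨p, hp⟩
  let Q : PrimeSpectrum R := ⟨q, hq.isPrime⟩
  have hPQ : P < Q := hpq
  let c : LTSeries (PrimeSpectrum R) :=
    { length := 1
      toFun := ![P, Q]
      step := by
        intro i
        fin_cases i
        simpa using hPQ }
  have hc := Order.LTSeries.length_le_krullDim c
  rw [ringKrullDim]
  exact le_trans (by norm_num) hc

end Aux

/-- The Krull dimension of the product ring `∏_{n ≥ 1} k[x]/(xⁿ)` is at least `1`,
even though each factor `k[x]/(xⁿ)` has Krull dimension `0`. -/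
theorem stmt_12 (k : Type*) [Field k] :
    1 ≤ ringKrullDim (∀ n : ℕ+, TruncPoly k n) ∧
      ∀ n : ℕ+, ringKrullDim (TruncPoly k n) = 0 := by
  constructor
  · -- the element x = (X mod Xⁿ)ₙ
    set a : ∀ n : ℕ+, TruncPoly k n := fun n => Ideal.Quotient.mk _ X with ha
    refine one_le_ringKrullDim_of_elt a ?_
    intro m b hEq
    -- look at the component n = m + 1
    set N : ℕ+ := ⟨m + 1, Nat.succ_pos m⟩ with hN
    have hcomp := congrFun hEq N
    have hNval : (N : ℕ) = m + 1 := rfl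
    have hzero : (a N) ^ (m + 1) = 0 := by
      rw [ha]
      rw [← map_pow, Ideal.Quotient.eq_zero_iff_mem, hNval]
      exact Ideal.mem_span_singleton_self _
    rw [Pi.pow_apply, Pi.mul_apply, Pi.pow_apply, hzero, zero_mul] at hcomp
    rw [ha] at hcomp
    rw [← map_pow, Ideal.Quotient.eq_zero_iff_mem, hNval,
      Ideal.mem_span_singleton] at hcomp
    have := Polynomial.natDegree_le_of_dvd hcomp (pow_ne_zero _ X_ne_zero)
    simp at this
  · intro n
    have := truncPoly_nontrivial k n
    have := truncPoly_artinian k n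
    refine le_antisymm ?_ ringKrullDim_nonneg_of_nontrivial
    rw [ringKrullDim, Order.krullDim_eq_iSup_length]
    rw [← WithBot.coe_zero]
    rw [WithBot.coe_le_coe]
    refine iSup_le fun c => ?_
    suffices hlen : c.length = 0 by simp [hlen]
    by_contra hlen
    have hpos : 0 < c.length := Nat.pos_of_ne_zero hlen
    have hstep := c.step ⟨0, hpos⟩
    have hmax : (c ⟨0, Nat.lt_succ_of_lt hpos⟩).asIdeal.IsMaximal :=
      IsArtinianRing.isMaximal_of_isPrime _
    have hlt : (c ⟨0, Nat.lt_succ_of_lt hpos⟩).asIdeal <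
        (c ⟨1, Nat.succ_lt_succ hpos⟩).asIdeal := hstep
    exact hlt.ne (hmax.eq_of_le (c ⟨1, Nat.succ_lt_succ hpos⟩).2.ne_top hlt.le)
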